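/- For all joint probability distributions P and Q such that Q is obtained from P by a conditionally mixing channel, it holds that max_{y: P_Y(y)>0} H_0(P_{X|Y=y}) ≤ max_{y′: Q_{Y′}(y′)>0} H_0(Q_{X′|Y′=y′}); that is, the quantity H_{+∞,0}(X|Y)_P = max_{y: P_Y(y)>0} H_0(P_{X|Y=y}) is monotone non-decreasing under conditionally mixing channels. -/

import Mathlib

open MeasureTheory
open scoped ENNReal

noncomputable section

/-- Base-2 logarithm. -/
def log2 (x : ℝ) : ℝ := Real.logb 2 x

/-- Base-2 exponential. -/
def exp2 (x : ℝ) : ℝ := (2 : ℝ) ^ x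

/-- Rényi entropy of order `α ∈ [0,∞]` of a vector `p` on a finite set. -/
def renyi {X : Type*} [Fintype X] (α : ℝ≥0∞) (p : X → ℝ) : ℝ :=
  if α = 0 then log2 (Nat.card {x : X // 0 < p x})
  else if α = 1 then -∑ x, p x * log2 (p x)
  else if α = ⊤ then -log2 (⨆ x, p x)
  else (1 - α.toReal)⁻¹ * log2 (∑ x, p x ^ α.toReal)

/-- A probability vector on a finite set. -/
def IsProbVec {X : Type*} [Fintype X] (p : X → ℝ) : Prop :=
  (∀ x, 0 ≤ p x) ∧ ∑ x, p x = 1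

/-- A doubly stochastic matrix. -/
def DoublyStochastic {X : Type*} [Fintype X] (S : Matrix X X ℝ) : Prop :=
  (∀ i j, 0 ≤ S i j) ∧ (∀ i, ∑ j, S i j = 1) ∧ (∀ j, ∑ i, S i j = 1)

/-- `Q` is obtained from `P` by a conditionally mixing channel. -/
def CondMixed {X Y Y' : Type*} [Fintype X] [Fintype Y] [Fintype Y']
    (P : Matrix X Y ℝ) (Q : Matrix X Y' ℝ) : Prop :=
  ∃ (k : ℕ) (S : Fin k → Matrix X X ℝ) (D : Fin k → Matrix Y Y' ℝ),
    (∀ i, DoublyStochastic (S i)) ∧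
    (∀ i a b, 0 ≤ D i a b) ∧
    (∀ a, ∑ b, ∑ i, D i a b = 1) ∧
    Q = ∑ i, S i * P * D i

/-- A joint probability distribution on finite alphabets, viewed as a matrix. -/
def IsJointProb {X Y : Type*} [Fintype X] [Fintype Y] (P : Matrix X Y ℝ) : Prop :=
  (∀ x y, 0 ≤ P x y) ∧ ∑ x, ∑ y, P x y = 1

/-- Marginal on the conditioning system: the `y`-th column sum. -/
def margY {X Y : Type*} [Fintype X] (P : Matrix X Y ℝ) (y : Y) : ℝ := ∑ x, P x y

/-- The conditioned distribution (normalized `y`-th column). -/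
def condX {X Y : Type*} [Fintype X] (P : Matrix X Y ℝ) (y : Y) : X → ℝ :=
  fun x => P x y / margY P y

/-- The conditional entropy `H_{t,τ}`. -/
def Hbulk {X Y : Type*} [Fintype X] [Fintype Y] (t : ℝ) (τ : Measure ℝ≥0∞)
    (P : Matrix X Y ℝ) : ℝ :=
  t⁻¹ * log2 (∑ y ∈ Finset.univ.filter (fun y => 0 < margY P y),
    margY P y * exp2 (t * ∫ α, renyi α (condX P y) ∂τ))

/-- The conditional entropy `H_{0,α}`. -/
def HzeroA {X Y : Type*} [Fintype X] [Fintype Y] (α : ℝ≥0∞) (P : Matrix X Y ℝ) : ℝ :=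
  ∑ y ∈ Finset.univ.filter (fun y => 0 < margY P y), margY P y * renyi α (condX P y)

/-- The conditional entropy `H_{-∞,τ}`. -/
def HnegInf {X Y : Type*} [Fintype X] [Fintype Y] (τ : Measure ℝ≥0∞)
    (P : Matrix X Y ℝ) : ℝ :=
  sInf ((fun y => ∫ α, renyi α (condX P y) ∂τ) '' {y | 0 < margY P y})

/-- The conditional entropy `H_{+∞,0}`. -/
def HposInf {X Y : Type*} [Fintype X] [Fintype Y] (P : Matrix X Y ℝ) : ℝ :=
  sSup ((fun y => renyi 0 (condX P y)) '' {y | 0 < margY P y})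

/-- The parameter set `𝒟_bulk`. -/
def Dbulk : Set (ℝ × Measure ℝ≥0∞) :=
  {p | p.1 ≠ 0 ∧ IsProbabilityMeasure p.2 ∧
    ∀ (d n n' : ℕ) (P : Matrix (Fin d) (Fin n) ℝ) (Q : Matrix (Fin d) (Fin n') ℝ),
      IsJointProb P → CondMixed P Q → Hbulk p.1 p.2 P ≤ Hbulk p.1 p.2 Q}

/-- The parameter set `𝒟_{-∞}`. -/
def DnegInf : Set (Measure ℝ≥0∞) :=
  {τ | IsProbabilityMeasure τ ∧
    ∀ (d n n' : ℕ) (P : Matrix (Fin d) (Fin n) ℝ) (Q : Matrix (Fin d) (Fin n') ℝ),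
      IsJointProb P → CondMixed P Q → HnegInf τ P ≤ HnegInf τ Q}

/-- `P'` is obtained from `P` by relabeling (injections) and embedding, with zeros elsewhere. -/
def Embeds {X Y X' Y' : Type*} [Fintype X] [Fintype Y] [Fintype X'] [Fintype Y']
    (P : Matrix X Y ℝ) (P' : Matrix X' Y' ℝ) : Prop :=
  ∃ (f : X ↪ X') (g : Y ↪ Y'),
    (∀ x y, P' (f x) (g y) = P x y) ∧
    (∀ x' y', P' x' y' ≠ 0 → (∃ x, f x = x') ∧ (∃ y, g y = y'))

/-- Conditional majorization: after a common embedding, a conditionally mixing channel maps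
(the embedding of) `P` to (the embedding of) `Q`. -/
def CondMajorizes {X Y X' Y' : Type*} [Fintype X] [Fintype Y] [Fintype X'] [Fintype Y']
    (P : Matrix X Y ℝ) (Q : Matrix X' Y' ℝ) : Prop :=
  ∃ (m n n' : ℕ) (P' : Matrix (Fin m) (Fin n) ℝ) (Q' : Matrix (Fin m) (Fin n') ℝ),
    Embeds P P' ∧ Embeds Q Q' ∧ CondMixed P' Q'

/-- Kronecker product of matrices. -/
def kron {X Y X' Y' : Type*} (P : Matrix X Y ℝ) (Q : Matrix X' Y' ℝ) :
    Matrix (X × X') (Y × Y') ℝ :=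
  Matrix.of fun x y => P x.1 y.1 * Q x.2 y.2

/-- `n`-fold Kronecker power of a matrix. -/
def kronPow {X Y : Type*} (P : Matrix X Y ℝ) (n : ℕ) :
    Matrix (Fin n → X) (Fin n → Y) ℝ :=
  Matrix.of fun x y => ∏ i, P (x i) (y i)

/-- Sum of all entries of a matrix. -/
def totalMass {X Y : Type*} [Fintype X] [Fintype Y] (P : Matrix X Y ℝ) : ℝ :=
  ∑ x, ∑ y, P x y

/-- `α/(1-α)`, with the convention that it equals `-1` at `α = ∞`. -/
def aRatio (α : ℝ≥0∞) : ℝ := if α = ⊤ then -1 else α.toReal / (1 - α.toReal)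

/-- `α/(α-1)`, with the convention that it equals `1` at `α = ∞`. -/
def aRatio' (α : ℝ≥0∞) : ℝ := if α = ⊤ then 1 else α.toReal / (α.toReal - 1)

/-- Rényi relative entropy `D_α(p‖r)`. -/
def relRenyi {X : Type*} [Fintype X] (α : ℝ≥0∞) (p r : X → ℝ) : ℝ :=
  if α = 1 then ∑ x, p x * log2 (p x / r x)
  else if α = ⊤ then log2 (⨆ x, p x / r x)
  else (α.toReal - 1)⁻¹ * log2 (∑ x, p x ^ α.toReal * r x ^ (1 - α.toReal))

/-- The quantity `I_{t,τ}(P‖R)`. -/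
def Ibulk {X Y : Type*} [Fintype X] [Fintype Y] (t : ℝ) (τ : Measure ℝ≥0∞)
    (P : Matrix X Y ℝ) (R : X → ℝ) : ℝ :=
  -t⁻¹ * log2 (∑ y ∈ Finset.univ.filter (fun y => 0 < margY P y),
    margY P y * exp2 (-t * ∫ α, relRenyi α (condX P y) R ∂τ))

/-- The quantity `I_{-∞,τ}(P‖R)`. -/
def InegInf {X Y : Type*} [Fintype X] [Fintype Y] (τ : Measure ℝ≥0∞)
    (P : Matrix X Y ℝ) (R : X → ℝ) : ℝ :=
  sSup ((fun y => ∫ α, relRenyi α (condX P y) R ∂τ) '' {y | 0 < margY P y})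

/-- A conditioned `R`-preserving channel maps `P` to `Q`. -/
def CondPreserving {X Y Y' : Type*} [Fintype X] [Fintype Y] [Fintype Y'] (R : X → ℝ)
    (P : Matrix X Y ℝ) (Q : Matrix X Y' ℝ) : Prop :=
  ∃ (k : ℕ) (G : Fin k → Matrix X X ℝ) (D : Fin k → Matrix Y Y' ℝ),
    (∀ i a b, 0 ≤ G i a b) ∧
    (∀ i b, ∑ a, G i a b = 1) ∧
    (∀ i, (G i).mulVec R = R) ∧
    (∀ i a b, 0 ≤ D i a b) ∧
    (∀ a, ∑ b, ∑ i, D i a b = 1) ∧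
    Q = ∑ i, G i * P * D i

/-- Total variation distance between two matrices. -/
def tvDist {X Y : Type*} [Fintype X] [Fintype Y] (P Q : Matrix X Y ℝ) : ℝ :=
  (1 / 2) * ∑ x, ∑ y, |P x y - Q x y|

open Finset in
lemma ds_card_support_le {X : Type*} [Fintype X] (S : Matrix X X ℝ)
    (hS : DoublyStochastic S) (v : X → ℝ) (hv : ∀ x, 0 ≤ v x) :
    (univ.filter fun x => 0 < v x).card ≤
      (univ.filter fun x => 0 < ∑ x', S x x' * v x').card := by
  classical
  obtain ⟨hS0, hSr, hSc⟩ := hS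
  set A := univ.filter fun x : X => 0 < ∑ x', S x x' * v x' with hA
  set B := univ.filter fun x : X => 0 < v x with hB
  have key : ∀ x ∉ A, ∀ x' ∈ B, S x x' = 0 := by
    intro x hx x' hx'
    have h0 : ∑ x', S x x' * v x' = 0 := by
      have hnn : 0 ≤ ∑ x', S x x' * v x' :=
        Finset.sum_nonneg fun i _ => mul_nonneg (hS0 _ _) (hv _)
      rcases hnn.lt_or_eq with h | h
      · exact absurd (by simpa [hA] using h) (by simpa [hA] using hx)
      · exact h.symm
    have := (Finset.sum_eq_zero_iff_of_nonneg
        (fun i _ => mul_nonneg (hS0 x i) (hv i))).mp h0 x' (mem_univ _)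
    have hv' : 0 < v x' := by simpa [hB] using hx'
    rcases mul_eq_zero.mp this with h | h
    · exact h
    · exact absurd h hv'.ne'
  have hcast : (B.card : ℝ) ≤ (A.card : ℝ) := by
    have h1 : (B.card : ℝ) = ∑ x' ∈ B, ∑ x, S x x' := by
      simp [hSc]
    have h2 : ∀ x' ∈ B, ∑ x, S x x' = ∑ x ∈ A, S x x' := by
      intro x' hx'
      rw [← Finset.sum_filter_add_sum_filter_not univ (· ∈ A)]
      have : ∑ x ∈ univ.filter (· ∉ A), S x x' = 0 :=
        Finset.sum_eq_zero fun x hx => key x (by simpa using (mem_filter.mp hx).2) x' hx'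
      simp [this, Finset.filter_mem_eq_inter]
    have h3 : (B.card : ℝ) = ∑ x ∈ A, ∑ x' ∈ B, S x x' := by
      rw [h1, Finset.sum_congr rfl h2, Finset.sum_comm]
    have h4 : ∑ x ∈ A, ∑ x' ∈ B, S x x' ≤ ∑ x ∈ A, (1 : ℝ) := by
      refine Finset.sum_le_sum fun x _ => ?_
      calc ∑ x' ∈ B, S x x' ≤ ∑ x', S x x' :=
            Finset.sum_le_sum_of_subset_of_nonneg (Finset.subset_univ _)
              (fun i _ _ => hS0 x i)
        _ = 1 := hSr x
    rw [h3]; simpa using h4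
  exact_mod_cast hcast

open Finset in
lemma renyi_zero_cond {X Y : Type*} [Fintype X] (P : Matrix X Y ℝ)
    (hP0 : ∀ x y, 0 ≤ P x y) (y : Y) (hy : 0 < margY P y) :
    renyi 0 (condX P y) = log2 ((univ.filter fun x : X => 0 < P x y).card) := by
  classical
  have hiff : ∀ x, 0 < condX P y x ↔ 0 < P x y := by
    intro x
    simp only [condX]
    constructor
    · intro h
      by_contra hc
      have : P x y = 0 := le_antisymm (not_lt.mp hc) (hP0 x y)
      simp [this] at h
    · intro h; exact div_pos h hy
  have : Nat.card {x : X // 0 < condX P y x} =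
      (univ.filter fun x : X => 0 < P x y).card := by
    rw [Nat.card_eq_fintype_card, Fintype.card_subtype]
    congr 1
    exact Finset.filter_congr fun x _ => by simp [hiff x]
  unfold renyi
  rw [if_pos rfl, this]

/-- The quantity `H_{+∞,0}(X|Y)_P = max_{y : P_Y(y)>0} H_0(P_{X|Y=y})` is
monotone non-decreasing under conditionally mixing channels. -/
theorem HposInf_monotone :
    ∀ (X Y Y' : Type) [Fintype X] [Fintype Y] [Fintype Y']
      (P : Matrix X Y ℝ) (Q : Matrix X Y' ℝ),
      IsJointProb P → IsJointProb Q → CondMixed P Q →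
      HposInf P ≤ HposInf Q := by
  classical
  intro X Y Y' _ _ _ P Q hP hQ hmix
  obtain ⟨k, S, D, hS, hD0, hDrow, hQeq⟩ := hmix
  have key : ∀ y : Y, 0 < margY P y →
      ∃ y' : Y', 0 < margY Q y' ∧
        renyi 0 (condX P y) ≤ renyi 0 (condX Q y') := by
    intro y hy
    have hexD : ∃ y' i, 0 < D i y y' := by
      by_contra h
      push_neg at h
      have hle : ∑ y', ∑ i, D i y y' ≤ 0 :=
        Finset.sum_nonpos fun y' _ => Finset.sum_nonpos fun i _ => h y' i
      rw [hDrow y] at hle; linarith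
    obtain ⟨y', i, hDpos⟩ := hexD
    set w : X → ℝ := fun x => ∑ x', S i x x' * P x' y with hw
    have hw0 : ∀ x, 0 ≤ w x := fun x =>
      Finset.sum_nonneg fun x' _ => mul_nonneg ((hS i).1 x x') (hP.1 x' y)
    have hQterm : ∀ x, D i y y' * w x ≤ Q x y' := by
      intro x
      have hform : Q x y' = ∑ j, ∑ z, (∑ x', S j x x' * P x' z) * D j z y' := by
        rw [hQeq, Matrix.sum_apply]
        exact Finset.sum_congr rfl fun j _ => by
          simp [Matrix.mul_apply]
      rw [hform]
      have h1 : D i y y' * w x ≤ ∑ z, (∑ x', S i x x' * P x' z) * D i z y' := by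
        have := Finset.single_le_sum
          (f := fun z => (∑ x', S i x x' * P x' z) * D i z y')
          (fun z _ => mul_nonneg
            (Finset.sum_nonneg fun x' _ => mul_nonneg ((hS i).1 x x') (hP.1 x' z))
            (hD0 i z y')) (Finset.mem_univ y)
        calc D i y y' * w x = (∑ x', S i x x' * P x' y) * D i y y' := by ring
          _ ≤ _ := this
      have h2 : ∑ z, (∑ x', S i x x' * P x' z) * D i z y' ≤
          ∑ j, ∑ z, (∑ x', S j x x' * P x' z) * D j z y' :=
        Finset.single_le_sum
          (f := fun j => ∑ z, (∑ x', S j x x' * P x' z) * D j z y')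
          (fun j _ => Finset.sum_nonneg fun z _ => mul_nonneg
            (Finset.sum_nonneg fun x' _ => mul_nonneg ((hS j).1 x x') (hP.1 x' z))
            (hD0 j z y')) (Finset.mem_univ i)
      linarith
    have hsub : (Finset.univ.filter fun x : X => 0 < w x) ⊆
        Finset.univ.filter fun x : X => 0 < Q x y' := by
      intro x hx
      have hwx : 0 < w x := by simpa using (Finset.mem_filter.mp hx).2
      have : 0 < D i y y' * w x := mul_pos hDpos hwx
      simp only [Finset.mem_filter, Finset.mem_univ, true_and]
      linarith [hQterm x]
    have hcard1 : (Finset.univ.filter fun x : X => 0 < P x y).card ≤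
        (Finset.univ.filter fun x : X => 0 < w x).card :=
      ds_card_support_le (S i) (hS i) (fun x => P x y) (fun x => hP.1 x y)
    have hcard2 := Finset.card_le_card hsub
    have hcardP : 0 < (Finset.univ.filter fun x : X => 0 < P x y).card := by
      obtain ⟨x0, hx0⟩ : ∃ x0, 0 < P x0 y := by
        by_contra h
        push_neg at h
        have hle : margY P y ≤ 0 := Finset.sum_nonpos fun x _ => h x
        linarith
      exact Finset.card_pos.mpr ⟨x0, by simp [hx0]⟩
    have hcardw : 0 < (Finset.univ.filter fun x : X => 0 < w x).card :=
      lt_of_lt_of_le hcardP hcard1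
    obtain ⟨x1, hx1⟩ := Finset.card_pos.mp hcardw
    have hwx1 : 0 < w x1 := by simpa using (Finset.mem_filter.mp hx1).2
    have hQx1 : 0 < Q x1 y' := lt_of_lt_of_le (mul_pos hDpos hwx1) (hQterm x1)
    have hmQ : 0 < margY Q y' :=
      lt_of_lt_of_le hQx1
        (Finset.single_le_sum (f := fun x => Q x y')
          (fun x _ => hQ.1 x y') (Finset.mem_univ x1))
    refine ⟨y', hmQ, ?_⟩
    rw [renyi_zero_cond P hP.1 y hy, renyi_zero_cond Q hQ.1 y' hmQ]
    unfold log2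
    refine (Real.logb_le_logb one_lt_two ?_ ?_).mpr ?_
    · exact_mod_cast hcardP
    · exact_mod_cast lt_of_lt_of_le hcardw hcard2
    · exact_mod_cast le_trans hcard1 hcard2
  have hne : ∃ y : Y, 0 < margY P y := by
    by_contra h
    push_neg at h
    have hle : ∑ x, ∑ y, P x y ≤ 0 := by
      refine Finset.sum_comm.trans_le ?_
      exact Finset.sum_nonpos fun y _ => by simpa [margY] using h y
    rw [hP.2] at hle; linarith
  obtain ⟨y0, hy0⟩ := hne
  unfold HposInf
  refine csSup_le ⟨_, ⟨y0, hy0, rfl⟩⟩ ?_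
  rintro a ⟨y, hy, rfl⟩
  obtain ⟨y', hy', hle⟩ := key y hy
  refine le_trans hle (le_csSup ?_ ⟨y', hy', rfl⟩)
  exact (Set.toFinite _).image _ |>.bddAbove
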